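/- For every integer p ≥ 2, every real x ≥ 0, every integer N ≥ 1 and every integer k ≥ 2, with X_n := x/n² and g_k the polynomial of degree k − 2 satisfying e_k(z)·e_k(−z) = 1 − z^k g_k(z)/k!, one has the decomposition S_{2,p}(x) = Σ_{n=1}^{N−1} (μ(n)/n^p)(1 − e^{−X_n}) − 1/ζ(p) + (1/k!)·Σ_{n=N}^∞ (μ(n)/n^p)·X_n^k·(f_k(X_n) − g_k(X_n))/e_k(X_n) + Σ_{n=N}^∞ (μ(n)/n^p)·Σ_{r=1}^{k−1} (−1)^{r−1} X_n^r/r!, with all series converging absolutely. -/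

import Mathlib

set_option maxHeartbeats 1000000


open scoped Nat ArithmeticFunction ArithmeticFunction.Moebius

/-- `f k z = e^{-z} · ₁F₁(1; k+1; z) = e^{-z} · Σ_{r=0}^∞ k! z^r / (r+k)!`. -/
noncomputable def rieszF (k : ℕ) (z : ℝ) : ℝ :=
  Real.exp (-z) * ∑' r : ℕ, (k ! : ℝ) * z ^ r / (r + k)!

/-- `e k z = Σ_{r=0}^{k-1} z^r / r!`, the sum of the first `k` terms of the
exponential series. -/
noncomputable def expPartial (k : ℕ) (z : ℝ) : ℝ :=
  ∑ r ∈ Finset.range k, z ^ r / r !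

/-- `X_n = x / n²`. -/
noncomputable def Xn (x : ℝ) (n : ℕ) : ℝ := x / (n : ℝ) ^ 2

/-- The general term of the tail series `T_N^{(1)}(p;x)`
(before division by `k!`): `(μ(n)/n^p) · X_n^k (f_k(X_n) − g_k(X_n)) / e_k(X_n)`. -/
noncomputable def tail1Term (p k : ℕ) (g : Polynomial ℝ) (x : ℝ) (n : ℕ) : ℝ :=
  (μ n : ℝ) / (n : ℝ) ^ p *
    (Xn x n ^ k * (rieszF k (Xn x n) - g.eval (Xn x n)) / expPartial k (Xn x n))

/-- The general term of the tail series `T_N^{(2)}(p;x)`: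
`(μ(n)/n^p) · Σ_{r=1}^{k−1} (−1)^{r−1} X_n^r / r!`. -/
noncomputable def tail2Term (p k : ℕ) (x : ℝ) (n : ℕ) : ℝ :=
  (μ n : ℝ) / (n : ℝ) ^ p *
    ∑ r ∈ Finset.Ico 1 k, (-1 : ℝ) ^ (r - 1) * Xn x n ^ r / (r ! : ℝ)


lemma real_exp_tsum (z : ℝ) : Real.exp z = ∑' n : ℕ, z ^ n / n ! := by
  rw [Real.exp_eq_exp_ℝ, NormedSpace.exp_eq_tsum_div]

lemma expPartial_tail (k : ℕ) (z : ℝ) :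
    ∑' r : ℕ, z ^ (r + k) / (r + k)! = Real.exp z - expPartial k z := by
  have h := Summable.sum_add_tsum_nat_add k (Real.summable_pow_div_factorial z)
  rw [real_exp_tsum, expPartial]
  linarith [h]

lemma rieszF_mul (k : ℕ) (z : ℝ) :
    z ^ k * rieszF k z = k ! * (1 - Real.exp (-z) * expPartial k z) := by
  have h1 : z ^ k * ∑' r : ℕ, (k ! : ℝ) * z ^ r / (r + k)!
      = (k ! : ℝ) * ∑' r : ℕ, z ^ (r + k) / (r + k)! := by
    rw [← tsum_mul_left, ← tsum_mul_left]
    refine tsum_congr fun r => ?_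
    rw [pow_add]
    ring
  have h2 : rieszF k z = Real.exp (-z) * ∑' r : ℕ, (k ! : ℝ) * z ^ r / (r + k)! := rfl
  have h3 : Real.exp (-z) * Real.exp z = 1 := by
    rw [← Real.exp_add]; simp
  calc z ^ k * rieszF k z
      = Real.exp (-z) * (z ^ k * ∑' r : ℕ, (k ! : ℝ) * z ^ r / (r + k)!) := by rw [h2]; ring
    _ = Real.exp (-z) * ((k ! : ℝ) * (Real.exp z - expPartial k z)) := by
        rw [h1, expPartial_tail]
    _ = (k ! : ℝ) * (1 - Real.exp (-z) * expPartial k z) := by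
        nlinarith [h3]

lemma expPartial_one_le {k : ℕ} (hk : 1 ≤ k) {z : ℝ} (hz : 0 ≤ z) :
    1 ≤ expPartial k z := by
  have h0 : (0 : ℕ) ∈ Finset.range k := Finset.mem_range.mpr hk
  have := Finset.single_le_sum (f := fun r : ℕ => z ^ r / r !)
    (fun i _ => by positivity) h0
  simpa [expPartial] using this

lemma expPartial_ne_zero {k : ℕ} (hk : 1 ≤ k) {z : ℝ} (hz : 0 ≤ z) :
    expPartial k z ≠ 0 := by
  have := expPartial_one_le hk hz; linarith

lemma abs_expPartial_neg_le {k : ℕ} {z x : ℝ} (hz : 0 ≤ z) (hzx : z ≤ x) :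
    |expPartial k (-z)| ≤ expPartial k x := by
  calc |expPartial k (-z)| ≤ ∑ r ∈ Finset.range k, |(-z) ^ r / r !| := by
        exact Finset.abs_sum_le_sum_abs _ _
    _ ≤ ∑ r ∈ Finset.range k, x ^ r / r ! := by
        refine Finset.sum_le_sum fun r _ => ?_
        rw [abs_div, abs_pow, abs_neg, abs_of_nonneg hz, Nat.abs_cast]
        gcongr
    _ = expPartial k x := rfl

lemma key1 {k : ℕ} (hk : 1 ≤ k) (g : Polynomial ℝ)
    (hg : ∀ z : ℝ, expPartial k z * expPartial k (-z) = 1 - z ^ k * g.eval z / k !)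
    {z : ℝ} (hz : 0 ≤ z) :
    z ^ k * (rieszF k z - g.eval z) / expPartial k z
      = (k ! : ℝ) * (expPartial k (-z) - Real.exp (-z)) := by
  have he : expPartial k z ≠ 0 := expPartial_ne_zero hk hz
  have hkf : (k ! : ℝ) ≠ 0 := Nat.cast_ne_zero.mpr (Nat.factorial_ne_zero k)
  have h2 : z ^ k * g.eval z = (k ! : ℝ) * (1 - expPartial k z * expPartial k (-z)) := by
    have := hg z
    field_simp at this
    linarith
  have h1 := rieszF_mul k z
  rw [div_eq_iff he]
  nlinarith [h1, h2]

lemma key2 {k : ℕ} (hk : 1 ≤ k) (z : ℝ) :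
    ∑ r ∈ Finset.Ico 1 k, (-1 : ℝ) ^ (r - 1) * z ^ r / (r ! : ℝ)
      = 1 - expPartial k (-z) := by
  have hsplit : expPartial k (-z) = 1 + ∑ r ∈ Finset.Ico 1 k, (-z) ^ r / r ! := by
    rw [expPartial, Finset.range_eq_Ico, Finset.sum_eq_sum_Ico_succ_bot hk]
    simp
  rw [hsplit]
  have : ∀ r ∈ Finset.Ico 1 k, (-1 : ℝ) ^ (r - 1) * z ^ r / (r ! : ℝ)
      = -((-z) ^ r / r !) := by
    intro r hr
    obtain ⟨s, rfl⟩ : ∃ s, r = s + 1 := by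
      have := (Finset.mem_Ico.mp hr).1; exact ⟨r - 1, by omega⟩
    simp only [Nat.add_sub_cancel]
    rw [neg_pow, pow_succ]
    ring
  rw [Finset.sum_congr rfl this, Finset.sum_neg_distrib]
  ring

lemma zeta_nat_cast {m : ℕ} (hm : 2 ≤ m) :
    riemannZeta m = ((∑' n : ℕ, 1 / (n : ℝ) ^ m : ℝ) : ℂ) := by
  rw [zeta_nat_eq_tsum_of_gt_one (by omega : 1 < m), Complex.ofReal_tsum]
  refine tsum_congr fun n => ?_
  push_cast
  rfl

lemma zeta_real_one_le {m : ℕ} (hm : 2 ≤ m) : 1 ≤ ∑' n : ℕ, 1 / (n : ℝ) ^ m := by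
  have hs : Summable fun n : ℕ => 1 / (n : ℝ) ^ m := Real.summable_one_div_nat_pow.mpr (by omega : 1 < m)
  have := Summable.le_tsum hs 1 (fun i _ => by positivity)
  simpa using this

lemma zeta_norm_one_le {m : ℕ} (hm : 2 ≤ m) : 1 ≤ ‖riemannZeta (m : ℂ)‖ := by
  rw [zeta_nat_cast hm, Complex.norm_real, Real.norm_eq_abs,
    abs_of_nonneg (by linarith [zeta_real_one_le hm])]
  exact zeta_real_one_le hm

lemma moebius_tsum_mul_zeta {m : ℕ} (hm : 2 ≤ m) :
    ((∑' n : ℕ, (μ n : ℝ) / (n : ℝ) ^ m : ℝ) : ℂ) * riemannZeta m = 1 := by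
  have hre : 1 < ((m : ℂ)).re := by
    simp only [Complex.natCast_re]
    exact_mod_cast (by omega : 1 < m)
  have h1 := ArithmeticFunction.LSeries_zeta_mul_Lseries_moebius (s := (m : ℂ)) hre
  rw [ArithmeticFunction.LSeries_zeta_eq_riemannZeta hre] at h1
  have h2 : LSeries (fun n => ((μ n : ℤ) : ℂ)) (m : ℂ)
      = ((∑' n : ℕ, (μ n : ℝ) / (n : ℝ) ^ m : ℝ) : ℂ) := by
    rw [Complex.ofReal_tsum, LSeries]
    refine tsum_congr fun n => ?_
    rcases eq_or_ne n 0 with rfl | hn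
    · simp
    · rw [LSeries.term_of_ne_zero hn, Complex.cpow_natCast]
      push_cast
      rfl
  rw [mul_comm, ← h2]
  exact h1

lemma abs_moebius_real_le_one (n : ℕ) : |((μ n : ℤ) : ℝ)| ≤ 1 := by
  exact_mod_cast ArithmeticFunction.abs_moebius_le_one (n := n)

lemma summable_mu_mul {p : ℕ} (hp : 2 ≤ p) {c : ℕ → ℝ} {C : ℝ} (hC : ∀ n, |c n| ≤ C) :
    Summable fun n : ℕ => (μ n : ℝ) / (n : ℝ) ^ p * c n := by
  refine Summable.of_norm_bounded
    ((Real.summable_one_div_nat_pow.mpr (by omega : 1 < p)).mul_left C) fun n => ?_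
  rcases eq_or_ne n 0 with rfl | hn
  · have h0 : ((0 : ℕ) : ℝ) ^ p = 0 := by
      rw [Nat.cast_zero]; exact zero_pow (by omega)
    simp [h0, zero_pow (by omega : p ≠ 0)]
  · have hpow : (0 : ℝ) < (n : ℝ) ^ p := by
      have : (0 : ℝ) < n := by exact_mod_cast Nat.pos_of_ne_zero hn
      positivity
    calc ‖(μ n : ℝ) / (n : ℝ) ^ p * c n‖
        = |(μ n : ℝ)| / (n : ℝ) ^ p * |c n| := by
          rw [Real.norm_eq_abs, abs_mul, abs_div, abs_of_pos hpow]
      _ ≤ 1 / (n : ℝ) ^ p * C := by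
          gcongr
          · exact abs_moebius_real_le_one n
          · exact hC n
      _ = C * (1 / (n : ℝ) ^ p) := by ring

lemma summable_shift {f : ℕ → ℝ} (h : Summable f) (N : ℕ) :
    Summable fun n => f (N + n) :=
  ((summable_nat_add_iff N).mpr h).congr fun n => by rw [add_comm]

theorem riesz_computational_scheme (p : ℕ) (hp : 2 ≤ p) (x : ℝ) (hx : 0 ≤ x)
    (N : ℕ) (hN : 1 ≤ N) (k : ℕ) (hk : 2 ≤ k) (g : Polynomial ℝ)
    (hg : ∀ z : ℝ, expPartial k z * expPartial k (-z) = 1 - z ^ k * g.eval z / k !) :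
    Summable (fun j : ℕ =>
      ‖(-1 : ℂ) ^ (j + 1) * (x : ℂ) ^ j / (j ! * riemannZeta (2 * j + p))‖) ∧
    Summable (fun n : ℕ => |tail1Term p k g x (N + n)|) ∧
    Summable (fun n : ℕ => |tail2Term p k x (N + n)|) ∧
    ∑' j : ℕ, (-1 : ℂ) ^ (j + 1) * (x : ℂ) ^ j / (j ! * riemannZeta (2 * j + p)) =
      ((∑ n ∈ Finset.Ico 1 N,
          (μ n : ℝ) / (n : ℝ) ^ p * (1 - Real.exp (-Xn x n)) : ℝ) : ℂ)
        - 1 / riemannZeta p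
        + ((1 / (k ! : ℝ) * ∑' n : ℕ, tail1Term p k g x (N + n) : ℝ) : ℂ)
        + ((∑' n : ℕ, tail2Term p k x (N + n) : ℝ) : ℂ) := by
  have hk1 : 1 ≤ k := by omega
  have hkf : (k ! : ℝ) ≠ 0 := Nat.cast_ne_zero.mpr (Nat.factorial_ne_zero k)
  have hkfpos : (0 : ℝ) < (k ! : ℝ) := by positivity
  have hXnn : ∀ n : ℕ, 0 ≤ Xn x n := fun n => div_nonneg hx (sq_nonneg _)
  have hXle : ∀ n : ℕ, Xn x n ≤ x := by
    intro n
    rcases Nat.eq_zero_or_pos n with rfl | hn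
    · simp [Xn, hx]
    · refine div_le_self hx ?_
      have h1 : (1 : ℝ) ≤ (n : ℝ) := by exact_mod_cast hn
      nlinarith
  have hexp1 : ∀ n : ℕ, Real.exp (-Xn x n) ≤ 1 := fun n =>
    Real.exp_le_one_iff.mpr (by linarith [hXnn n])
  have hexppos : ∀ n : ℕ, 0 < Real.exp (-Xn x n) := fun n => Real.exp_pos _
  -- rewrite tail terms
  have ht1eq : ∀ n : ℕ, tail1Term p k g x n
      = (μ n : ℝ) / (n : ℝ) ^ p
        * ((k ! : ℝ) * (expPartial k (-Xn x n) - Real.exp (-Xn x n))) := by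
    intro n
    rw [tail1Term, ← key1 hk1 g hg (hXnn n)]
  have ht2eq : ∀ n : ℕ, tail2Term p k x n
      = (μ n : ℝ) / (n : ℝ) ^ p * (1 - expPartial k (-Xn x n)) := by
    intro n
    rw [tail2Term, key2 hk1]
  have hb1 : ∀ n : ℕ,
      |(k ! : ℝ) * (expPartial k (-Xn x n) - Real.exp (-Xn x n))|
        ≤ (k ! : ℝ) * (expPartial k x + 1) := by
    intro n
    rw [abs_mul, abs_of_pos hkfpos]
    have h1 := abs_expPartial_neg_le (k := k) (hXnn n) (hXle n)
    have h2 : |Real.exp (-Xn x n)| ≤ 1 := by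
      rw [abs_of_pos (hexppos n)]; exact hexp1 n
    have := abs_sub (expPartial k (-Xn x n)) (Real.exp (-Xn x n))
    gcongr
    calc |expPartial k (-Xn x n) - Real.exp (-Xn x n)|
        ≤ |expPartial k (-Xn x n)| + |Real.exp (-Xn x n)| := abs_sub _ _
      _ ≤ expPartial k x + 1 := add_le_add h1 h2
  have hb2 : ∀ n : ℕ, |1 - expPartial k (-Xn x n)| ≤ 1 + expPartial k x := by
    intro n
    calc |1 - expPartial k (-Xn x n)|
        ≤ |(1 : ℝ)| + |expPartial k (-Xn x n)| := abs_sub _ _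
      _ ≤ 1 + expPartial k x := by
          rw [abs_one]
          exact add_le_add le_rfl (abs_expPartial_neg_le (hXnn n) (hXle n))
  have hs1 : Summable fun n : ℕ => tail1Term p k g x n :=
    (summable_mu_mul hp hb1).congr fun n => (ht1eq n).symm
  have hs2 : Summable fun n : ℕ => tail2Term p k x n :=
    (summable_mu_mul hp hb2).congr fun n => (ht2eq n).symm
  have hs1' : Summable fun n : ℕ => tail1Term p k g x (N + n) := summable_shift hs1 N
  have hs2' : Summable fun n : ℕ => tail2Term p k x (N + n) := summable_shift hs2 N
  -- summability of mu over n^m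
  have hsmu : ∀ m : ℕ, 2 ≤ m → Summable fun n : ℕ => (μ n : ℝ) / (n : ℝ) ^ m := by
    intro m hm
    have := summable_mu_mul hm (c := fun _ => (1 : ℝ)) (C := 1) fun n => by simp
    simpa using this
  -- the complex terms are casts of real terms
  have hterm : ∀ j : ℕ,
      (-1 : ℂ) ^ (j + 1) * (x : ℂ) ^ j / (j ! * riemannZeta (2 * j + p))
        = (((-1 : ℝ) ^ (j + 1) * x ^ j / j !
            * ∑' n : ℕ, (μ n : ℝ) / (n : ℝ) ^ (2 * j + p) : ℝ) : ℂ) := by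
    intro j
    have hm : 2 ≤ 2 * j + p := by omega
    have hcast : ((2 * j + p : ℕ) : ℂ) = 2 * (j : ℂ) + (p : ℂ) := by push_cast; ring
    have hinv : ((∑' n : ℕ, (μ n : ℝ) / (n : ℝ) ^ (2 * j + p) : ℝ) : ℂ)
        = (riemannZeta (2 * (j : ℂ) + (p : ℂ)))⁻¹ := by
      rw [← hcast]
      exact eq_inv_of_mul_eq_one_left (moebius_tsum_mul_zeta hm)
    rw [div_eq_mul_inv, mul_inv, ← hinv]
    push_cast
    ring
  refine ⟨?_, summable_abs_iff.mpr hs1', summable_abs_iff.mpr hs2', ?_⟩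
  · -- summability of the Riesz series
    refine Summable.of_nonneg_of_le (fun j => norm_nonneg _) (fun j => ?_)
      (Real.summable_pow_div_factorial x)
    have hm : 2 ≤ 2 * j + p := by omega
    have h1 : 1 ≤ ‖riemannZeta (2 * (j : ℂ) + (p : ℂ))‖ := by
      have := zeta_norm_one_le hm
      rwa [show ((2 * j + p : ℕ) : ℂ) = 2 * (j : ℂ) + (p : ℂ) by push_cast; ring] at this
    have hjf : (0 : ℝ) < (j ! : ℝ) := by positivity
    calc ‖(-1 : ℂ) ^ (j + 1) * (x : ℂ) ^ j / (j ! * riemannZeta (2 * j + p))‖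
        = x ^ j / ((j ! : ℝ) * ‖riemannZeta (2 * (j : ℂ) + (p : ℂ))‖) := by
          rw [norm_div, norm_mul, norm_mul, norm_pow, norm_pow, norm_neg, norm_one,
            one_pow, one_mul, Complex.norm_natCast, Complex.norm_real,
            Real.norm_eq_abs, abs_of_nonneg hx]
      _ ≤ x ^ j / ((j ! : ℝ) * 1) := by
          have hd : (0:ℝ) < (j ! : ℝ) * 1 := by positivity
          apply div_le_div_of_nonneg_left (by positivity) hd
          nlinarith [h1, hjf]
      _ = x ^ j / j ! := by rw [mul_one]
  · -- the main identity
    -- the double sequence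
    set a : ℕ → ℕ → ℝ := fun j n =>
      (-1 : ℝ) ^ (j + 1) * x ^ j / j ! * ((μ n : ℝ) / (n : ℝ) ^ (2 * j + p)) with ha
    have hprod : Summable (fun q : ℕ × ℕ =>
        (fun j : ℕ => x ^ j / j !) q.1 * (fun n : ℕ => |(μ n : ℝ) / (n : ℝ) ^ p|) q.2) :=
      (Real.summable_pow_div_factorial x).mul_of_nonneg ((hsmu p hp).abs)
        (fun j => by positivity) (fun n => abs_nonneg _)
    have hsa : Summable (Function.uncurry a) := by
      refine Summable.of_norm_bounded hprod ?_
      rintro ⟨j, n⟩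
      simp only [Function.uncurry, ha, Real.norm_eq_abs]
      rw [abs_mul, abs_div, abs_mul, abs_pow, abs_pow, abs_neg, abs_one, one_pow, one_mul,
        abs_of_nonneg hx, Nat.abs_cast]
      have hmn : |(μ n : ℝ) / (n : ℝ) ^ (2 * j + p)| ≤ |(μ n : ℝ) / (n : ℝ) ^ p| := by
        rcases eq_or_ne n 0 with rfl | hn
        · simp [zero_pow (show 2 * j + p ≠ 0 by omega), zero_pow (show p ≠ 0 by omega)]
        · have h1 : (1 : ℝ) ≤ (n : ℝ) := by exact_mod_cast Nat.pos_of_ne_zero hn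
          rw [abs_div, abs_div, abs_pow, abs_pow, Nat.abs_cast]
          exact div_le_div_of_nonneg_left (abs_nonneg _) (by positivity)
            (pow_le_pow_right₀ h1 (by omega))
      exact mul_le_mul_of_nonneg_left hmn (by positivity)
    have hFj : ∀ j : ℕ,
        (-1 : ℝ) ^ (j + 1) * x ^ j / j ! * ∑' n : ℕ, (μ n : ℝ) / (n : ℝ) ^ (2 * j + p)
          = ∑' n : ℕ, a j n := fun j => (tsum_mul_left).symm
    have hswap : ∑' (j : ℕ) (n : ℕ), a j n = ∑' (n : ℕ) (j : ℕ), a j n :=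
      (Summable.tsum_comm hsa).symm
    have hinner : ∀ n : ℕ, ∑' j : ℕ, a j n
        = -((μ n : ℝ) / (n : ℝ) ^ p * Real.exp (-Xn x n)) := by
      intro n
      rcases eq_or_ne n 0 with rfl | hn
      · simp [ha]
      · have hn0 : ((n : ℝ)) ≠ 0 := Nat.cast_ne_zero.mpr hn
        have hterm' : ∀ j : ℕ, a j n
            = (μ n : ℝ) / (n : ℝ) ^ p * -((-Xn x n) ^ j / j !) := by
          intro j
          have hjf : (j ! : ℝ) ≠ 0 := Nat.cast_ne_zero.mpr (Nat.factorial_ne_zero j)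
          have hpow : (n : ℝ) ^ (2 * j + p) = ((n : ℝ) ^ 2) ^ j * (n : ℝ) ^ p := by
            rw [pow_add, pow_mul]
          rw [ha]
          simp only [Xn]
          rw [show (-(x / (n : ℝ) ^ 2)) ^ j = (-1 : ℝ) ^ j * (x / (n : ℝ) ^ 2) ^ j from neg_pow _ _, div_pow, hpow]
          field_simp
          ring
        rw [tsum_congr hterm', tsum_mul_left, tsum_neg, ← real_exp_tsum]
        ring
    -- pieces of the tail decomposition
    have hpt : ∀ n : ℕ, (μ n : ℝ) / (n : ℝ) ^ p * (1 - Real.exp (-Xn x n))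
        = 1 / (k ! : ℝ) * tail1Term p k g x n + tail2Term p k x n := by
      intro n
      rw [ht1eq n, ht2eq n]
      have hinv : (1 / (k ! : ℝ)) * (k ! : ℝ) = 1 := one_div_mul_cancel hkf
      linear_combination (-((μ n : ℝ) / (n : ℝ) ^ p
        * (expPartial k (-Xn x n) - Real.exp (-Xn x n)))) * hinv
    have hs0 : Summable fun n : ℕ =>
        (μ n : ℝ) / (n : ℝ) ^ p * (1 - Real.exp (-Xn x n)) := by
      refine summable_mu_mul hp (C := 1) fun n => ?_
      rw [abs_of_nonneg (by linarith [hexp1 n])]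
      linarith [hexppos n]
    have hsexp : Summable fun n : ℕ =>
        (μ n : ℝ) / (n : ℝ) ^ p * Real.exp (-Xn x n) := by
      refine summable_mu_mul hp (C := 1) fun n => ?_
      rw [abs_of_pos (hexppos n)]
      exact hexp1 n
    -- chain of equalities for the real sum
    have hchain : ∑' j : ℕ, ((-1 : ℝ) ^ (j + 1) * x ^ j / j !
          * ∑' n : ℕ, (μ n : ℝ) / (n : ℝ) ^ (2 * j + p))
        = (∑ n ∈ Finset.Ico 1 N, (μ n : ℝ) / (n : ℝ) ^ p * (1 - Real.exp (-Xn x n)))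
          - (∑' n : ℕ, (μ n : ℝ) / (n : ℝ) ^ p)
          + 1 / (k ! : ℝ) * (∑' n : ℕ, tail1Term p k g x (N + n))
          + ∑' n : ℕ, tail2Term p k x (N + n) := by
      rw [tsum_congr hFj, hswap, tsum_congr hinner]
      have step4 : ∀ n : ℕ, -((μ n : ℝ) / (n : ℝ) ^ p * Real.exp (-Xn x n))
          = (μ n : ℝ) / (n : ℝ) ^ p * (1 - Real.exp (-Xn x n))
            - (μ n : ℝ) / (n : ℝ) ^ p := fun n => by ring
      rw [tsum_congr step4, Summable.tsum_sub hs0 (hsmu p hp)]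
      have hsplit : ∑' n : ℕ, (μ n : ℝ) / (n : ℝ) ^ p * (1 - Real.exp (-Xn x n))
          = (∑ n ∈ Finset.range N, (μ n : ℝ) / (n : ℝ) ^ p * (1 - Real.exp (-Xn x n)))
            + ∑' n : ℕ, (μ (N + n) : ℝ) / ((N + n : ℕ) : ℝ) ^ p
                * (1 - Real.exp (-Xn x (N + n))) := by
        rw [← Summable.sum_add_tsum_nat_add N hs0]
        congr 1
        exact tsum_congr fun n => by rw [add_comm n N]
      rw [hsplit]
      have hhead : ∑ n ∈ Finset.range N, (μ n : ℝ) / (n : ℝ) ^ p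
            * (1 - Real.exp (-Xn x n))
          = ∑ n ∈ Finset.Ico 1 N, (μ n : ℝ) / (n : ℝ) ^ p
            * (1 - Real.exp (-Xn x n)) := by
        rw [Finset.range_eq_Ico, Finset.sum_eq_sum_Ico_succ_bot (by omega : 0 < N)]
        simp
      have htail : ∑' n : ℕ, (μ (N + n) : ℝ) / ((N + n : ℕ) : ℝ) ^ p
            * (1 - Real.exp (-Xn x (N + n)))
          = 1 / (k ! : ℝ) * (∑' n : ℕ, tail1Term p k g x (N + n))
            + ∑' n : ℕ, tail2Term p k x (N + n) := by
        rw [tsum_congr fun n => hpt (N + n), Summable.tsum_add (hs1'.mul_left _) hs2',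
          tsum_mul_left]
      rw [hhead, htail]
      ring
    have hMp : ((∑' n : ℕ, (μ n : ℝ) / (n : ℝ) ^ p : ℝ) : ℂ) = 1 / riemannZeta p := by
      rw [one_div]
      exact eq_inv_of_mul_eq_one_left (moebius_tsum_mul_zeta hp)
    calc ∑' j : ℕ, (-1 : ℂ) ^ (j + 1) * (x : ℂ) ^ j / (j ! * riemannZeta (2 * j + p))
        = (((∑' j : ℕ, ((-1 : ℝ) ^ (j + 1) * x ^ j / j !
            * ∑' n : ℕ, (μ n : ℝ) / (n : ℝ) ^ (2 * j + p)) : ℝ)) : ℂ) := by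
          rw [Complex.ofReal_tsum]
          exact tsum_congr hterm
      _ = _ := by
          rw [hchain, ← hMp]
          push_cast
          ring
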